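/- If G and H are signed graphs on n and m vertices respectively, then the characteristic polynomial of the (ordinary) corona product G∘H of signed graphs satisfies f_{G∘H}(λ) = (f_H(λ))^n · f_G(λ − χ_H(λ)), where χ_H(λ) = μ_H[V_H]ᵀ(λI − A(H))⁻¹μ_H[V_H] is the signed coronal of H. -/

import Mathlib

open Matrix BigOperators

/-- Characteristic polynomial of the (ordinary) corona product of signed graphs:
`f_{G∘H}(λ) = (f_H(λ))^n · f_G(λ - χ_H(λ))`, where `χ_H` is the signed coronal
of `H`. -/
theorem corona_product_charpoly {n m : ℕ}
    (A : Matrix (Fin n) (Fin n) ℝ) (B : Matrix (Fin m) (Fin m) ℝ)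
    (μG : Fin n → ℝ) (μH : Fin m → ℝ)
    (hA : A.IsSymm) (hB : B.IsSymm)
    (hμG : ∀ i, μG i = 1 ∨ μG i = -1) (hμH : ∀ j, μH j = 1 ∨ μH j = -1)
    (lam : ℝ) (hinv : IsUnit (lam • (1 : Matrix (Fin m) (Fin m) ℝ) - B).det) :
    (lam • (1 : Matrix (Fin n ⊕ (Fin m × Fin n)) (Fin n ⊕ (Fin m × Fin n)) ℝ) -
      Matrix.fromBlocks A
        (Matrix.of fun i (p : Fin m × Fin n) => if i = p.2 then μG i * μH p.1 else 0)
        (Matrix.of fun (p : Fin m × Fin n) i => if i = p.2 then μG i * μH p.1 else 0)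
        (Matrix.blockDiagonal fun _ : Fin n => B)).det
    = ((lam • (1 : Matrix (Fin m) (Fin m) ℝ) - B).det) ^ n *
      ((lam - μH ⬝ᵥ ((lam • (1 : Matrix (Fin m) (Fin m) ℝ) - B)⁻¹ *ᵥ μH))
          • (1 : Matrix (Fin n) (Fin n) ℝ) - A).det := by
  set M : Matrix (Fin m) (Fin m) ℝ := lam • (1 : Matrix (Fin m) (Fin m) ℝ) - B with hM
  haveI : Invertible M := M.invertibleOfIsUnitDet hinv
  set B' : Matrix (Fin n) (Fin m × Fin n) ℝ :=
    Matrix.of fun i (p : Fin m × Fin n) => if i = p.2 then μG i * μH p.1 else 0 with hB'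
  set C' : Matrix (Fin m × Fin n) (Fin n) ℝ :=
    Matrix.of fun (p : Fin m × Fin n) i => if i = p.2 then μG i * μH p.1 else 0 with hC'
  have hD : Matrix.blockDiagonal (fun _ : Fin n => M) *
      Matrix.blockDiagonal (fun _ : Fin n => M⁻¹) = 1 := by
    rw [← Matrix.blockDiagonal_mul]
    simp only [Matrix.mul_nonsing_inv M hinv]
    exact Matrix.blockDiagonal_one
  haveI : Invertible (Matrix.blockDiagonal (fun _ : Fin n => M)) :=
    invertibleOfRightInverse _ _ hD
  have hinvOf : ⅟(Matrix.blockDiagonal (fun _ : Fin n => M)) =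
      Matrix.blockDiagonal (fun _ : Fin n => M⁻¹) := invOf_eq_right_inv hD
  have hblock : lam • (1 : Matrix (Fin n ⊕ (Fin m × Fin n)) (Fin n ⊕ (Fin m × Fin n)) ℝ) -
      Matrix.fromBlocks A B' C' (Matrix.blockDiagonal fun _ : Fin n => B) =
      Matrix.fromBlocks (lam • (1 : Matrix (Fin n) (Fin n) ℝ) - A) (-B') (-C')
        (Matrix.blockDiagonal fun _ : Fin n => M) := by
    ext i j
    rcases i with i | ⟨k, t⟩ <;> rcases j with j | ⟨k', t'⟩ <;>
      simp only [Matrix.sub_apply, Matrix.smul_apply, Matrix.one_apply,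
        Matrix.fromBlocks_apply₁₁, Matrix.fromBlocks_apply₁₂, Matrix.fromBlocks_apply₂₁,
        Matrix.fromBlocks_apply₂₂, Matrix.blockDiagonal_apply, Matrix.neg_apply, hM,
        Sum.inl.injEq, Sum.inr.injEq, Prod.mk.injEq, smul_eq_mul, reduceCtorEq] <;>
      split_ifs <;> simp_all
  have hkey : B' * Matrix.blockDiagonal (fun _ : Fin n => M⁻¹) * C' =
      (μH ⬝ᵥ (M⁻¹ *ᵥ μH)) • (1 : Matrix (Fin n) (Fin n) ℝ) := by
    ext i j
    simp only [Matrix.mul_apply, hB', hC', Matrix.of_apply, Matrix.blockDiagonal_apply,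
      Fintype.sum_prod_type, Matrix.smul_apply, Matrix.one_apply, smul_eq_mul,
      dotProduct, Matrix.mulVec, mul_ite, ite_mul, zero_mul, mul_zero,
      Finset.sum_ite_eq, Finset.sum_ite_eq', Finset.mem_univ, if_true,
      Finset.sum_ite_irrel, Finset.sum_const_zero]
    by_cases hij : i = j
    · subst hij
      simp only [if_true]
      have hμ : μG i * μG i = 1 := by rcases hμG i with h | h <;> rw [h] <;> norm_num
      rw [mul_one]
      simp only [Finset.sum_mul, Finset.mul_sum]
      rw [Finset.sum_comm]
      refine Finset.sum_congr rfl fun k _ => Finset.sum_congr rfl fun k' _ => ?_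
      linear_combination (μH k * M⁻¹ k k' * μH k') * hμ
    · simp [hij, if_neg hij]
  calc (lam • (1 : Matrix (Fin n ⊕ (Fin m × Fin n)) (Fin n ⊕ (Fin m × Fin n)) ℝ) -
      Matrix.fromBlocks A B' C' (Matrix.blockDiagonal fun _ : Fin n => B)).det
      = (Matrix.fromBlocks (lam • (1 : Matrix (Fin n) (Fin n) ℝ) - A) (-B') (-C')
        (Matrix.blockDiagonal fun _ : Fin n => M)).det := by rw [hblock]
    _ = (Matrix.blockDiagonal fun _ : Fin n => M).det *
        ((lam • (1 : Matrix (Fin n) (Fin n) ℝ) - A) -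
          (-B') * ⅟(Matrix.blockDiagonal fun _ : Fin n => M) * (-C')).det :=
        Matrix.det_fromBlocks₂₂ _ _ _ _
    _ = M.det ^ n *
        ((lam - μH ⬝ᵥ (M⁻¹ *ᵥ μH)) • (1 : Matrix (Fin n) (Fin n) ℝ) - A).det := by
        rw [Matrix.det_blockDiagonal, Finset.prod_const, Finset.card_univ, Fintype.card_fin]
        congr 2
        rw [hinvOf, Matrix.neg_mul, Matrix.mul_neg, Matrix.neg_mul, neg_neg, hkey,
          sub_smul, sub_right_comm]
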